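/- arXiv:1508.07522 — 5 statements merged into one kernel-verified Lean document; each statement's English description precedes it below -/
import Mathlib

section
/- For all real m ≥ 2, 1.31 / (exp(1.31/(m+1)) - 1) ≥ m. -/
theorem stmt_1 : ∀ m : ℝ, 2 ≤ m →
    1.31 / (Real.exp (1.31 / (m + 1)) - 1) ≥ m := by
  intro m hm
  have hm1 : (0:ℝ) < m + 1 := by linarith
  set x : ℝ := 1.31 / (m + 1) with hxdef
  have hx0 : 0 < x := by positivity
  have hx1 : x ≤ 1 := by
    rw [hxdef, div_le_one hm1]; linarith
  have hexp : Real.exp x ≤ 1 + x + x ^ 2 / 2 + (7/18) * x ^ 3 := by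
    have h := Real.exp_bound' hx0.le hx1 (n := 3) (by norm_num)
    simp [Finset.sum_range_succ, Nat.factorial] at h
    nlinarith [h]
  have hpos : 0 < Real.exp x - 1 := by
    have := Real.add_one_lt_exp (x := x) (by positivity)
    linarith
  rw [ge_iff_le, le_div_iff₀ hpos]
  have hx : x * (m + 1) = 1.31 := by
    rw [hxdef]; field_simp
  nlinarith [sq_nonneg x, sq_nonneg (m - 2), mul_le_mul_of_nonneg_left hexp (by linarith : (0:ℝ) ≤ m), sq_nonneg (x*m), hx0.le, mul_pos hx0 hx0]
end

section
/- For all real m ≥ 2, (m - 1.31) / (exp((2.1·m + 3.41)/(m+1)) - 1) < 0.14·m. -/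
lemma exp21 : (8.143 : ℝ) < Real.exp 2.1 := by
  have h := Real.sum_le_exp_of_nonneg (x := 2.1) (by norm_num) 9
  refine lt_of_lt_of_le ?_ h
  simp [Finset.sum_range_succ]
  norm_num [Nat.factorial]

theorem stmt_3 : ∀ m : ℝ, 2 ≤ m →
    (m - 1.31) / (Real.exp ((2.1 * m + 3.41) / (m + 1)) - 1) < 0.14 * m := by
  intro m hm
  have hm1 : (0 : ℝ) < m + 1 := by linarith
  have harg : (2.1 : ℝ) ≤ (2.1 * m + 3.41) / (m + 1) := by
    rw [le_div_iff₀ hm1]; nlinarith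
  have hE : (8.143 : ℝ) < Real.exp ((2.1 * m + 3.41) / (m + 1)) :=
    lt_of_lt_of_le exp21 (Real.exp_le_exp.2 harg)
  have hpos : (0 : ℝ) < Real.exp ((2.1 * m + 3.41) / (m + 1)) - 1 := by linarith
  rw [div_lt_iff₀ hpos]
  nlinarith
end

section
/- For all real m ≥ 20, (m - 1.31) / (exp((2.1·m + 3.41)/(m+1)) - 1) > 0.13·m - 0.5. -/
theorem stmt_4 : ∀ m : ℝ, 20 ≤ m →
    (m - 1.31) / (Real.exp ((2.1 * m + 3.41) / (m + 1)) - 1) > 0.13 * m - 0.5 := by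
  intro m hm
  have hm1 : (0:ℝ) < m + 1 := by linarith
  have hm2 : (0:ℝ) < m - 0.31 := by linarith
  have hx : (2.1 * m + 3.41) / (m + 1) = 2.1 + 1.31 / (m + 1) := by
    field_simp; ring
  have hE : Real.exp ((2.1 * m + 3.41) / (m + 1))
      = Real.exp 2.1 * Real.exp (1.31 / (m + 1)) := by
    rw [hx, Real.exp_add]
  -- bound exp 2.1
  have h1 : Real.exp 1 < 2.7182818286 := Real.exp_one_lt_d9
  have h1pos : (0:ℝ) < Real.exp 1 := Real.exp_pos 1
  have h01 : Real.exp 0.1 < 1 / 0.9 := by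
    have h := Real.add_one_lt_exp (by norm_num : (-0.1:ℝ) ≠ 0)
    have h2 : (0.9:ℝ) < Real.exp (-0.1) := by linarith
    have heq : Real.exp 0.1 = (Real.exp (-0.1))⁻¹ := by
      rw [← Real.exp_neg]; norm_num
    rw [heq, show (1:ℝ)/0.9 = (0.9:ℝ)⁻¹ by norm_num]
    exact inv_strictAnti₀ (by norm_num) h2
  have h21 : Real.exp 2.1 < 8.2101 := by
    have heq : Real.exp 2.1 = Real.exp 1 * Real.exp 1 * Real.exp 0.1 := by
      rw [← Real.exp_add, ← Real.exp_add]; norm_num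
    have h01pos : (0:ℝ) < Real.exp 0.1 := Real.exp_pos 0.1
    nlinarith
  -- bound exp (1.31/(m+1))
  have hxpos : (0:ℝ) < 1.31 / (m + 1) := by positivity
  have hxe : Real.exp (1.31 / (m + 1)) < (m + 1) / (m - 0.31) := by
    have h := Real.add_one_lt_exp (show -(1.31 / (m + 1)) ≠ 0 by
      simp only [neg_ne_zero]; positivity)
    have hq : (m - 0.31) / (m + 1) < Real.exp (-(1.31 / (m + 1))) := by
      have : (m - 0.31) / (m + 1) = -(1.31 / (m + 1)) + 1 := by
        field_simp; ring
      linarith [this ▸ h]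
    have hqpos : (0:ℝ) < (m - 0.31) / (m + 1) := by positivity
    have heq : Real.exp (1.31 / (m + 1)) = (Real.exp (-(1.31 / (m + 1))))⁻¹ := by
      rw [← Real.exp_neg, neg_neg]
    rw [heq, show (m + 1) / (m - 0.31) = ((m - 0.31) / (m + 1))⁻¹ by
      rw [inv_div]]
    exact inv_strictAnti₀ hqpos hq
  have hexppos : (0:ℝ) < Real.exp (1.31 / (m + 1)) := Real.exp_pos _
  have hE1 : 1 < Real.exp ((2.1 * m + 3.41) / (m + 1)) := by
    have ht : 0 < (2.1 * m + 3.41) / (m + 1) := div_pos (by linarith) hm1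
    linarith [Real.add_one_le_exp ((2.1 * m + 3.41) / (m + 1))]
  have hEb : Real.exp ((2.1 * m + 3.41) / (m + 1)) * (m - 0.31)
      < 8.2101 * (m + 1) := by
    rw [hE]
    have h2 : Real.exp (1.31 / (m + 1)) * (m - 0.31) < m + 1 :=
      (lt_div_iff₀ hm2).mp hxe
    nlinarith [Real.exp_pos (2.1:ℝ)]
  rw [gt_iff_lt, lt_div_iff₀ (by linarith : (0:ℝ) < Real.exp ((2.1 * m + 3.41) / (m + 1)) - 1)]
  nlinarith [hEb, hE1, hm, mul_pos (show (0:ℝ) < 0.13 * m - 0.5 by linarith)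
    (show (0:ℝ) < 8.2101 * (m + 1) - Real.exp ((2.1 * m + 3.41) / (m + 1)) * (m - 0.31) by linarith)]
end

section
/- Let r₂ = 1.31/(exp(1.31/(m+1)) - 1), r₃ = 1/(e - 1), and r₆ = (m - 1.31)/(exp((2.1m+3.41)/(m+1)) - 1). Then for all real m ≥ 2, r₂ + r₆ - m·r₃ > 0. -/
lemma exp_cubic_ub (x : ℝ) (h : |x| ≤ 1) (hx : 0 ≤ x) :
    Real.exp x ≤ 1 + x + x^2/2 + 2/9*x^3 := by
  have := Real.exp_bound h (n:=3) (by norm_num)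
  simp [Finset.sum_range_succ, Nat.factorial] at this
  rw [abs_of_nonneg hx] at this
  have h2 := abs_le.mp this
  nlinarith [h2.2]

theorem stmt_9 : ∀ m : ℝ, 2 ≤ m →
    1.31 / (Real.exp (1.31 / (m + 1)) - 1)
      + (m - 1.31) / (Real.exp ((2.1 * m + 3.41) / (m + 1)) - 1)
      - m * (1 / (Real.exp 1 - 1)) > 0 := by
  intro m hm
  have hm1 : (0:ℝ) < m + 1 := by linarith
  set x : ℝ := 1.31 / (m + 1) with hxdef
  have hx0 : 0 < x := by positivity
  have hxle : x ≤ 1.31 / 3 := by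
    apply div_le_div_of_nonneg_left (by norm_num) (by norm_num)
    linarith
  have hx1 : |x| ≤ 1 := by rw [abs_of_nonneg hx0.le]; linarith
  -- denominator positivity for r₂
  have hd2 : 0 < Real.exp x - 1 := by
    have := Real.add_one_lt_exp (x := x) (by positivity : x ≠ 0)
    linarith
  -- r₂ ≥ m
  have hr2 : m ≤ 1.31 / (Real.exp x - 1) := by
    rw [le_div_iff₀ hd2]
    have hub := exp_cubic_ub x hx1 hx0.le
    have hxm : x * (m + 1) = 1.31 := by
      rw [hxdef]; exact div_mul_cancel₀ _ hm1.ne'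
    nlinarith [sq_nonneg x, sq_nonneg (x - 1/m), hx0.le, hxle,
      mul_pos hx0 (by linarith : (0:ℝ) < m)]
  -- r₆ > 0
  have hy0 : 0 < (2.1 * m + 3.41) / (m + 1) := by positivity
  have hd6 : 0 < Real.exp ((2.1 * m + 3.41) / (m + 1)) - 1 := by
    have := Real.add_one_lt_exp (x := (2.1 * m + 3.41) / (m + 1)) (by positivity)
    linarith
  have hr6 : 0 < (m - 1.31) / (Real.exp ((2.1 * m + 3.41) / (m + 1)) - 1) := by
    apply div_pos (by linarith) hd6
  -- m / (e - 1) < m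
  have he : (2.7:ℝ) < Real.exp 1 := by
    have := Real.exp_one_gt_d9
    linarith
  have hde : (0:ℝ) < Real.exp 1 - 1 := by linarith
  have hr3 : m * (1 / (Real.exp 1 - 1)) < m := by
    have h1 : 1 / (Real.exp 1 - 1) < 1 := by
      rw [div_lt_one hde]; linarith
    nlinarith [h1, (by linarith : (0:ℝ) < m)]
  linarith
end

section
/- Define r₁ = -1.1/(exp(-1.1) - 1), r₂ = 1.31/(exp(1.31/(m+1)) - 1), r₃ = 1/(e-1), r₄ = 0.1/(e-1), r₅ = -0.21/(exp(-2.1)-1), r₆ = (m-1.31)/(exp((2.1m+3.41)/(m+1)) - 1), r₇ = r₁+r₃+r₄, r₈ = r₁+r₂+r₅, r₉ = r₂+r₆-m·r₃, and let x = (e, exp(-2.1), exp((2.1m+3.41)/(m+1))). Then for every real m ≥ 2, the following three equations hold: -r₁x₁x₂ - r₃x₁ - r₄x₁ + r₇ = 0; -r₁x₁x₂ - r₂x₂x₃ - r₅x₂ + r₈ = 0; -r₂x₂x₃ + m·r₃x₁ - r₆x₃ + r₉ = 0. -/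
theorem stmt_19 : ∀ m : ℝ, 2 ≤ m →
    let r₁ : ℝ := -1.1 / (Real.exp (-1.1) - 1)
    let r₂ : ℝ := 1.31 / (Real.exp (1.31 / (m + 1)) - 1)
    let r₃ : ℝ := 1 / (Real.exp 1 - 1)
    let r₄ : ℝ := 0.1 / (Real.exp 1 - 1)
    let r₅ : ℝ := -0.21 / (Real.exp (-2.1) - 1)
    let r₆ : ℝ := (m - 1.31) / (Real.exp ((2.1 * m + 3.41) / (m + 1)) - 1)
    let r₇ : ℝ := r₁ + r₃ + r₄
    let r₈ : ℝ := r₁ + r₂ + r₅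
    let r₉ : ℝ := r₂ + r₆ - m * r₃
    let x₁ : ℝ := Real.exp 1
    let x₂ : ℝ := Real.exp (-2.1)
    let x₃ : ℝ := Real.exp ((2.1 * m + 3.41) / (m + 1))
    (-r₁ * x₁ * x₂ - r₃ * x₁ - r₄ * x₁ + r₇ = 0) ∧
    (-r₁ * x₁ * x₂ - r₂ * x₂ * x₃ - r₅ * x₂ + r₈ = 0) ∧
    (-r₂ * x₂ * x₃ + m * r₃ * x₁ - r₆ * x₃ + r₉ = 0) := by
  intro m hm
  have hm1 : (0:ℝ) < m + 1 := by linarith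
  have hm1' : (m:ℝ) + 1 ≠ 0 := ne_of_gt hm1
  -- nonvanishing denominators
  have e1 : Real.exp (-1.1) - 1 ≠ 0 := by
    rw [sub_ne_zero]
    intro h
    have := (Real.exp_eq_one_iff (-1.1)).mp h
    norm_num at this
  have e2 : Real.exp (1.31 / (m + 1)) - 1 ≠ 0 := by
    rw [sub_ne_zero]
    intro h
    have := (Real.exp_eq_one_iff (1.31 / (m + 1))).mp h
    rw [div_eq_zero_iff] at this
    rcases this with h' | h' <;> [norm_num at h'; exact hm1' h']
  have e3 : Real.exp 1 - 1 ≠ 0 := by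
    rw [sub_ne_zero]
    intro h
    have := (Real.exp_eq_one_iff 1).mp h
    norm_num at this
  have e5 : Real.exp (-2.1) - 1 ≠ 0 := by
    rw [sub_ne_zero]
    intro h
    have := (Real.exp_eq_one_iff (-2.1)).mp h
    norm_num at this
  have e6 : Real.exp ((2.1 * m + 3.41) / (m + 1)) - 1 ≠ 0 := by
    rw [sub_ne_zero]
    intro h
    have := (Real.exp_eq_one_iff ((2.1 * m + 3.41) / (m + 1))).mp h
    rw [div_eq_zero_iff] at this
    rcases this with h' | h' <;> [nlinarith; exact hm1' h']
  -- exp product identities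
  have h12 : Real.exp 1 * Real.exp (-2.1) = Real.exp (-1.1) := by
    rw [← Real.exp_add]; norm_num
  have h23 : Real.exp (-2.1) * Real.exp ((2.1 * m + 3.41) / (m + 1))
      = Real.exp (1.31 / (m + 1)) := by
    rw [← Real.exp_add]
    congr 1
    field_simp
    ring
  -- cancellation facts
  have k1 : (-1.1 / (Real.exp (-1.1) - 1)) * (Real.exp (-1.1) - 1) = -1.1 :=
    div_mul_cancel₀ _ e1
  have k2 : (1.31 / (Real.exp (1.31 / (m + 1)) - 1)) * (Real.exp (1.31 / (m + 1)) - 1) = 1.31 :=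
    div_mul_cancel₀ _ e2
  have k3 : ((1:ℝ) / (Real.exp 1 - 1)) * (Real.exp 1 - 1) = 1 :=
    div_mul_cancel₀ _ e3
  have k4 : (0.1 / (Real.exp 1 - 1)) * (Real.exp 1 - 1) = 0.1 :=
    div_mul_cancel₀ _ e3
  have k5 : (-0.21 / (Real.exp (-2.1) - 1)) * (Real.exp (-2.1) - 1) = -0.21 :=
    div_mul_cancel₀ _ e5
  have k6 : ((m - 1.31) / (Real.exp ((2.1 * m + 3.41) / (m + 1)) - 1)) *
      (Real.exp ((2.1 * m + 3.41) / (m + 1)) - 1) = m - 1.31 :=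
    div_mul_cancel₀ _ e6
  refine ⟨?_, ?_, ?_⟩
  · linear_combination (-(-1.1 / (Real.exp (-1.1) - 1))) * h12 - k1 - k3 - k4
  · linear_combination (-(-1.1 / (Real.exp (-1.1) - 1))) * h12
      + (-(1.31 / (Real.exp (1.31 / (m + 1)) - 1))) * h23 - k1 - k2 - k5
  · linear_combination (-(1.31 / (Real.exp (1.31 / (m + 1)) - 1))) * h23
      - k2 + m * k3 - k6
end
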